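/- The idempotent semilattice E(S_{G,Λ}) of the inverse semigroup S_{G,Λ} associated to a self-similar k-graph (G,Λ) consists exactly of the finite subsets F of {(μ, e_G, μ) : μ ∈ Λ} such that Λ^min(μ,ν) = ∅ for all distinct (μ,e_G,μ), (ν,e_G,ν) ∈ F. In particular E(S_{G,Λ}) does not depend on the group G. -/

import Mathlib

/-- A `k`-graph: a countable small category with degree functor to `ℕ^k`
satisfying the unique factorization property.  Objects (vertices) are
identified with the paths of degree `0`. -/
structure KGraph (k : ℕ) where
  Path : Type
  countable : Countable Path
  src : Path → Path
  rng : Path → Path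
  deg : Path → Fin k → ℕ
  comp : (μ ν : Path) → src μ = rng ν → Path
  deg_src : ∀ μ, deg (src μ) = 0
  deg_rng : ∀ μ, deg (rng μ) = 0
  src_vtx : ∀ μ, deg μ = 0 → src μ = μ
  rng_vtx : ∀ μ, deg μ = 0 → rng μ = μ
  src_comp : ∀ μ ν h, src (comp μ ν h) = src ν
  rng_comp : ∀ μ ν h, rng (comp μ ν h) = rng μ
  deg_comp : ∀ μ ν h, deg (comp μ ν h) = deg μ + deg ν
  comp_assoc : ∀ μ ν ρ (h1 : src μ = rng ν) (h2 : src (comp μ ν h1) = rng ρ)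
    (h3 : src ν = rng ρ) (h4 : src μ = rng (comp ν ρ h3)),
    comp (comp μ ν h1) ρ h2 = comp μ (comp ν ρ h3) h4
  rng_id_comp : ∀ μ (h : src (rng μ) = rng μ), comp (rng μ) μ h = μ
  comp_src_id : ∀ μ (h : src μ = rng (src μ)), comp μ (src μ) h = μ
  factor : ∀ μ (m n : Fin k → ℕ), deg μ = m + n →
    ∃! p : Path × Path, ∃ h : src p.1 = rng p.2,
      deg p.1 = m ∧ deg p.2 = n ∧ comp p.1 p.2 h = μ

namespace KGraph

variable {k : ℕ}

/-- The set `Λ^min(μ,ν)` of pairs `(α,β)` with `μα = νβ` a minimal common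
extension of `μ` and `ν`. -/
def lmin (Λ : KGraph k) (μ ν : Λ.Path) : Set (Λ.Path × Λ.Path) :=
  {p | ∃ (h1 : Λ.src μ = Λ.rng p.1) (h2 : Λ.src ν = Λ.rng p.2),
    Λ.comp μ p.1 h1 = Λ.comp ν p.2 h2 ∧
    Λ.deg μ + Λ.deg p.1 = Λ.deg μ ⊔ Λ.deg ν}

/-- `Λ` is finitely aligned when every `Λ^min(μ,ν)` is finite. -/
def FinitelyAligned (Λ : KGraph k) : Prop := ∀ μ ν : Λ.Path, (Λ.lmin μ ν).Finite

/-- `X ⊆ vΛ` is exhaustive: every path with range `v` has a minimal common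
extension with some member of `X`. -/
def Exhaustive (Λ : KGraph k) (v : Λ.Path) (X : Set Λ.Path) : Prop :=
  ∀ lam : Λ.Path, Λ.rng lam = v → ∃ τ ∈ X, Λ.lmin lam τ ≠ ∅

/-- `Λ` is row finite: finitely many edges of each colour into each vertex. -/
def RowFinite (Λ : KGraph k) : Prop :=
  ∀ v : Λ.Path, Λ.deg v = 0 → ∀ i : Fin k,
    {e : Λ.Path | Λ.deg e = Pi.single i 1 ∧ Λ.rng e = v}.Finite

/-- `Λ` has no sources: every vertex receives an edge of each colour. -/
def NoSources (Λ : KGraph k) : Prop :=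
  ∀ v : Λ.Path, Λ.deg v = 0 → ∀ i : Fin k,
    {e : Λ.Path | Λ.deg e = Pi.single i 1 ∧ Λ.rng e = v}.Nonempty

end KGraph

/-- A self-similar `k`-graph `(G,Λ,φ)`. -/
structure SelfSimilar (k : ℕ) (G : Type) [Group G] (Λ : KGraph k) where
  act : G → Λ.Path → Λ.Path
  φ : G → Λ.Path → G
  act_one : ∀ μ, act 1 μ = μ
  act_mul : ∀ g h μ, act (g * h) μ = act g (act h μ)
  deg_act : ∀ g μ, Λ.deg (act g μ) = Λ.deg μ
  src_act : ∀ g μ, Λ.src (act g μ) = act g (Λ.src μ)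
  rng_act : ∀ g μ, Λ.rng (act g μ) = act g (Λ.rng μ)
  φ_mul : ∀ g h μ, φ (g * h) μ = φ g (act h μ) * φ h μ
  act_comp : ∀ g μ ν (h : Λ.src μ = Λ.rng ν)
      (h' : Λ.src (act g μ) = Λ.rng (act (φ g μ) ν)),
      act g (Λ.comp μ ν h) = Λ.comp (act g μ) (act (φ g μ) ν) h'
  φ_comp : ∀ g μ ν (h : Λ.src μ = Λ.rng ν),
      φ g (Λ.comp μ ν h) = φ (φ g μ) ν
  φ_vtx : ∀ g v, Λ.deg v = 0 → φ g v = g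

variable {k : ℕ} {G : Type} [Group G] {Λ : KGraph k}

/-- Orthogonality of two triples: `Λ^min(μ,ξ) = Λ^min(ν,η) = ∅`. -/
def Orth (Λ : KGraph k) (t u : Λ.Path × G × Λ.Path) : Prop :=
  Λ.lmin t.1 u.1 = ∅ ∧ Λ.lmin t.2.2 u.2.2 = ∅

/-- Membership in `S_{G,Λ}`: a finite set of pairwise orthogonal triples
`(μ,g,ν)` with `s(μ) = g⬝s(ν)`. -/
def IsElem (SS : SelfSimilar k G Λ) (F : Set (Λ.Path × G × Λ.Path)) : Prop :=
  F.Finite ∧ (∀ t ∈ F, Λ.src t.1 = SS.act t.2.1 (Λ.src t.2.2)) ∧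
    ∀ t ∈ F, ∀ u ∈ F, t ≠ u → Orth Λ t u

/-- The multiplication of `S_{G,Λ}`. -/
def smul (SS : SelfSimilar k G Λ) (E F : Set (Λ.Path × G × Λ.Path)) :
    Set (Λ.Path × G × Λ.Path) :=
  {t | ∃ μ g ν ξ h η α β, (μ, g, ν) ∈ E ∧ (ξ, h, η) ∈ F ∧ (α, β) ∈ Λ.lmin ν ξ ∧
    ∃ (h1 : Λ.src μ = Λ.rng (SS.act g α)) (h2 : Λ.src η = Λ.rng (SS.act h⁻¹ β)),
      t = (Λ.comp μ (SS.act g α) h1,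
           SS.φ g α * SS.φ h (SS.act h⁻¹ β),
           Λ.comp η (SS.act h⁻¹ β) h2)}

/-- The involution `F* = {(ν,g⁻¹,μ) : (μ,g,ν) ∈ F}`. -/
def sstar (F : Set (Λ.Path × G × Λ.Path)) : Set (Λ.Path × G × Λ.Path) :=
  {t | (t.2.2, t.2.1⁻¹, t.1) ∈ F}

/-- The singleton idempotent `ι_μ = {(μ,e_G,μ)}`. -/
def iota (Λ : KGraph k) (G : Type) [Group G] (μ : Λ.Path) :
    Set (Λ.Path × G × Λ.Path) := {(μ, (1 : G), μ)}

/-- Idempotents of `S_{G,Λ}`. -/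
def IsIdem (SS : SelfSimilar k G Λ) (E : Set (Λ.Path × G × Λ.Path)) : Prop :=
  IsElem SS E ∧ smul SS E E = E

/-- The natural partial order of the inverse semigroup `S_{G,Λ}`:
`s ≤ t` iff `s = te` for some idempotent `e`. -/
def leS (SS : SelfSimilar k G Λ) (s t : Set (Λ.Path × G × Λ.Path)) : Prop :=
  ∃ E, IsIdem SS E ∧ smul SS t E = s

/-- `τ` is strongly fixed by `g`. -/
def StronglyFixed (SS : SelfSimilar k G Λ) (g : G) (τ : Λ.Path) : Prop :=
  SS.act g τ = τ ∧ SS.φ g τ = 1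

/-- The set `SF_g` of paths strongly fixed by `g`. -/
def SFg (SS : SelfSimilar k G Λ) (g : G) : Set Λ.Path :=
  {τ | SS.act g τ = τ ∧ SS.φ g τ = 1}

/-- `SF_g` is locally exhausted. -/
def LocallyExhausted (SS : SelfSimilar k G Λ) (g : G) : Prop :=
  ∀ v : Λ.Path, Λ.deg v = 0 →
    ∃ M : Set Λ.Path, M.Finite ∧ (∀ τ ∈ M, τ ∈ SFg SS g ∧ Λ.rng τ = v) ∧
      ∀ τ ∈ SFg SS g, Λ.rng τ = v → ∃ τ' ∈ M, Λ.lmin τ τ' ≠ ∅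

/-- The principal ideal `J_F` admits a finite cover. -/
def HasFiniteCover (SS : SelfSimilar k G Λ) (F : Set (Λ.Path × G × Λ.Path)) : Prop :=
  ∃ C : Set (Set (Λ.Path × G × Λ.Path)), C.Finite ∧
    (∀ E ∈ C, IsIdem SS E ∧ smul SS F E = E) ∧
    ∀ E, IsIdem SS E → smul SS F E = E → E ≠ ∅ → ∃ E' ∈ C, smul SS E E' ≠ ∅

/-- A (proper, nonzero) filter in the idempotent semilattice `E(S_{G,Λ})`. -/
def IsFilterE (SS : SelfSimilar k G Λ) (𝓕 : Set (Set (Λ.Path × G × Λ.Path))) : Prop :=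
  𝓕.Nonempty ∧ (∀ E ∈ 𝓕, IsIdem SS E) ∧ (∅ ∉ 𝓕) ∧
    (∀ E ∈ 𝓕, ∀ F ∈ 𝓕, smul SS E F ∈ 𝓕) ∧
    ∀ E ∈ 𝓕, ∀ F, IsIdem SS F → smul SS F E = E → F ∈ 𝓕

/-- An ultrafilter: a maximal filter in `E(S_{G,Λ})`. -/
def IsUltrafilterE (SS : SelfSimilar k G Λ) (𝓕 : Set (Set (Λ.Path × G × Λ.Path))) : Prop :=
  IsFilterE SS 𝓕 ∧ ∀ 𝓖, IsFilterE SS 𝓖 → 𝓕 ⊆ 𝓖 → 𝓖 = 𝓕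

/-- `n ≤ m` for `m ∈ (ℕ ∪ {∞})^k` and `n ∈ ℕ^k`. -/
def LeDeg {k : ℕ} (m : Fin k → ℕ∞) (n : Fin k → ℕ) : Prop :=
  ∀ i, (n i : ℕ∞) ≤ m i

/-- A boundary path `x` of a finitely aligned `k`-graph, recorded via its
degree `d(x) ∈ (ℕ∪{∞})^k` and its initial segments `x(0,n)` for `n ≤ d(x)`. -/
structure BoundaryPath (Λ : KGraph k) where
  bdeg : Fin k → ℕ∞
  seg : (Fin k → ℕ) → Λ.Path
  deg_seg : ∀ n, LeDeg bdeg n → Λ.deg (seg n) = n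
  rng_seg : ∀ n, LeDeg bdeg n → Λ.rng (seg n) = seg 0
  seg_comp : ∀ m n : Fin k → ℕ, LeDeg bdeg (m + n) →
    ∃ (τ : Λ.Path) (h : Λ.src (seg m) = Λ.rng τ),
      Λ.deg τ = n ∧ seg (m + n) = Λ.comp (seg m) τ h
  seg_junk : ∀ n, ¬ LeDeg bdeg n → seg n = seg 0
  boundary : ∀ n, LeDeg bdeg n → ∀ X : Set Λ.Path, X.Finite →
    (∀ τ ∈ X, Λ.rng τ = Λ.src (seg n) ∧ τ ≠ Λ.src (seg n)) →
    KGraph.Exhaustive Λ (Λ.src (seg n)) X →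
    ∃ τ ∈ X, ∃ (_ : LeDeg bdeg (n + Λ.deg τ)) (h : Λ.src (seg n) = Λ.rng τ),
      seg (n + Λ.deg τ) = Λ.comp (seg n) τ h

/-- `z = σ^n(x)`, the shift of the boundary path `x` by `n`. -/
def IsShift (Λ : KGraph k) (x : BoundaryPath Λ) (n : Fin k → ℕ)
    (z : BoundaryPath Λ) : Prop :=
  (∀ i, z.bdeg i = x.bdeg i - (n i : ℕ∞)) ∧
    ∀ p, LeDeg z.bdeg p → ∃ h : Λ.src (x.seg n) = Λ.rng (z.seg p),
      x.seg (n + p) = Λ.comp (x.seg n) (z.seg p) h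

/-- `z = g⬝x` for boundary paths. -/
def IsActB (SS : SelfSimilar k G Λ) (g : G) (x z : BoundaryPath Λ) : Prop :=
  z.bdeg = x.bdeg ∧ ∀ p, LeDeg x.bdeg p → z.seg p = SS.act g (x.seg p)

/-- `y = lam⬝z`, the concatenation of a finite path with a boundary path. -/
def IsCompB (Λ : KGraph k) (lam : Λ.Path) (z y : BoundaryPath Λ) : Prop :=
  (∀ i, y.bdeg i = (Λ.deg lam i : ℕ∞) + z.bdeg i) ∧
    ∀ p, LeDeg z.bdeg p → ∃ h : Λ.src lam = Λ.rng (z.seg p),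
      y.seg (Λ.deg lam + p) = Λ.comp lam (z.seg p) h

/-- `x ∈ Z(lam)`, i.e. `x(0,d(lam)) = lam`. -/
def InZ (Λ : KGraph k) (x : BoundaryPath Λ) (lam : Λ.Path) : Prop :=
  LeDeg x.bdeg (Λ.deg lam) ∧ x.seg (Λ.deg lam) = lam

/-- `y` is a fixed point for `θ_{{(μ,g,ν)}}`: `y ∈ Z(ν)` and `μ(g⬝σ^{d(ν)}(y)) = y`. -/
def FixedPt (SS : SelfSimilar k G Λ) (μ : Λ.Path) (g : G) (ν : Λ.Path)
    (y : BoundaryPath Λ) : Prop :=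
  InZ Λ y ν ∧ ∃ z w, IsShift Λ y (Λ.deg ν) z ∧ IsActB SS g z w ∧ IsCompB Λ μ w y

/-- `y` is an interior fixed point for `θ_{{(μ,g,ν)}}`: some cylinder containing
`y` consists entirely of fixed points. -/
def InteriorFixedPt (SS : SelfSimilar k G Λ) (μ : Λ.Path) (g : G) (ν : Λ.Path)
    (y : BoundaryPath Λ) : Prop :=
  ∃ η : Λ.Path, InZ Λ y η ∧ ∀ y', InZ Λ y' η → FixedPt SS μ g ν y'

/-- `G`-aperiodic condition (A). -/
def CondA (SS : SelfSimilar k G Λ) : Prop :=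
  ∀ v : Λ.Path, Λ.deg v = 0 → ∃ x : BoundaryPath Λ, x.seg 0 = v ∧
    ∀ (m n : Fin k → ℕ), LeDeg x.bdeg m → LeDeg x.bdeg n →
      ∀ (g : G) (z w : BoundaryPath Λ),
        IsShift Λ x m z → IsShift Λ x n w → IsActB SS g w z → m = n

/-- `(G,Λ)` is `G`-cofinal. -/
def GCofinal (SS : SelfSimilar k G Λ) : Prop :=
  ∀ v : Λ.Path, Λ.deg v = 0 → ∀ x : BoundaryPath Λ,
    ∃ n : Fin k → ℕ, LeDeg x.bdeg n ∧ ∃ (g : G) (p : Λ.Path),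
      Λ.rng p = v ∧ Λ.src p = SS.act g (Λ.src (x.seg n))

/-- The ultrafilter `F_x` associated to a boundary path `x`. -/
def Fx (SS : SelfSimilar k G Λ) (x : BoundaryPath Λ) :
    Set (Set (Λ.Path × G × Λ.Path)) :=
  {E | IsIdem SS E ∧ ∃ n : Fin k → ℕ, LeDeg x.bdeg n ∧
    (x.seg n, (1 : G), x.seg n) ∈ E}

lemma phi_one (SS : SelfSimilar k G Λ) (μ : Λ.Path) : SS.φ 1 μ = 1 := by
  have h := SS.φ_mul 1 1 μ
  rw [one_mul, SS.act_one] at h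
  exact (left_eq_mul.mp h)

lemma comp_congr (Λ : KGraph k) {μ γ γ' : Λ.Path} (h : Λ.src μ = Λ.rng γ)
    (e : γ = γ') : Λ.comp μ γ h = Λ.comp μ γ' (e ▸ h) := by subst e; rfl

lemma src_in_lmin (Λ : KGraph k) (μ : Λ.Path) :
    (Λ.src μ, Λ.src μ) ∈ Λ.lmin μ μ := by
  have hv : Λ.rng (Λ.src μ) = Λ.src μ := Λ.rng_vtx _ (Λ.deg_src μ)
  refine ⟨hv.symm, hv.symm, rfl, ?_⟩
  rw [Λ.deg_src, sup_idem, add_zero]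

lemma lmin_comp_left (Λ : KGraph k) (μ γ : Λ.Path) (h : Λ.src μ = Λ.rng γ) :
    Λ.lmin (Λ.comp μ γ h) μ ≠ ∅ := by
  intro hempty
  have hv : Λ.rng (Λ.src (Λ.comp μ γ h)) = Λ.src (Λ.comp μ γ h) :=
    Λ.rng_vtx _ (Λ.deg_src _)
  have hmem : (Λ.src (Λ.comp μ γ h), γ) ∈ Λ.lmin (Λ.comp μ γ h) μ := by
    refine ⟨hv.symm, h, ?_, ?_⟩
    · exact Λ.comp_src_id _ _
    · rw [Λ.deg_src, add_zero, Λ.deg_comp]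
      exact (sup_eq_left.mpr (by intro i; simp)).symm
  rw [hempty] at hmem
  exact hmem

/-- the idempotents of `S_{G,Λ}` are exactly the finite subsets of
`{(μ,e_G,μ) : μ ∈ Λ}` whose distinct members have `Λ^min(μ,ν) = ∅`; in
particular `E(S_{G,Λ})` does not depend on `G`. -/
theorem stmt4 (SS : SelfSimilar k G Λ) (hfa : Λ.FinitelyAligned)
    (F : Set (Λ.Path × G × Λ.Path)) :
    IsIdem SS F ↔
      (F.Finite ∧ (∀ t ∈ F, ∃ μ : Λ.Path, t = (μ, (1 : G), μ)) ∧
        ∀ t ∈ F, ∀ u ∈ F, t ≠ u → Λ.lmin t.1 u.1 = ∅) := by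
  constructor
  · rintro ⟨⟨hfin, hsrc, horth⟩, hmul⟩
    refine ⟨hfin, ?_, ?_⟩
    · rintro ⟨μ, g, ν⟩ htF
      have htm : (μ, g, ν) ∈ smul SS F F := by rw [hmul]; exact htF
      obtain ⟨μ1, g1, ν1, ξ, h2, η, α, β, hm1, hm2, hab, hh1, hh2, ht⟩ := htm
      rw [Prod.mk.injEq, Prod.mk.injEq] at ht
      obtain ⟨e1, e2, e3⟩ := ht
      -- t = (μ1,g1,ν1)
      have ht1 : (μ, g, ν) = (μ1, g1, ν1) := by
        by_contra hne
        exact lmin_comp_left Λ μ1 (SS.act g1 α) hh1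
          (by have h' : Λ.lmin μ μ1 = ∅ := (horth _ htF _ hm1 hne).1
              rw [e1] at h'; exact h')
      have ht2 : (μ, g, ν) = (ξ, h2, η) := by
        by_contra hne
        exact lmin_comp_left Λ η (SS.act h2⁻¹ β) hh2
          (by have h' : Λ.lmin ν η = ∅ := (horth _ htF _ hm2 hne).2
              rw [e3] at h'; exact h')
      rw [Prod.mk.injEq, Prod.mk.injEq] at ht1 ht2
      obtain ⟨rfl, rfl, rfl⟩ := ht1
      obtain ⟨rfl, rfl, rfl⟩ := ht2
      -- now hab : (α,β) ∈ lmin ν μ, e1 : μ = comp μ (act g α), etc.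
      have hα0 : Λ.deg α = 0 := by
        have := congrArg Λ.deg e1
        rw [Λ.deg_comp, left_eq_add, SS.deg_act] at this
        exact this
      have hβ0 : Λ.deg β = 0 := by
        have := congrArg Λ.deg e3
        rw [Λ.deg_comp, left_eq_add, SS.deg_act] at this
        exact this
      obtain ⟨hA, hB, hC, hD⟩ := hab
      have hαv : α = Λ.src ν := by rw [← Λ.rng_vtx α hα0, ← hA]
      have hβv : β = Λ.src μ := by rw [← Λ.rng_vtx β hβ0, ← hB]
      subst hαv; subst hβv
      rw [Λ.comp_src_id ν hA, Λ.comp_src_id μ hB] at hC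
      subst hC
      -- e2 : g = φ g (src ν) * φ g (act g⁻¹ (src ν))
      rw [SS.φ_vtx g _ (Λ.deg_src ν),
        SS.φ_vtx g _ (by rw [SS.deg_act]; exact Λ.deg_src ν),
        left_eq_mul] at e2
      exact ⟨ν, by rw [e2]⟩
    · intro t ht u hu hne
      exact (horth t ht u hu hne).1
  · rintro ⟨hfin, hdiag, hdisj⟩
    have hfe : IsElem SS F := by
      refine ⟨hfin, ?_, ?_⟩
      · intro t ht
        obtain ⟨μ, rfl⟩ := hdiag t ht
        simp [SS.act_one]
      · intro t ht u hu hne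
        obtain ⟨μ, rfl⟩ := hdiag t ht
        obtain ⟨ν, rfl⟩ := hdiag u hu
        exact ⟨hdisj _ ht _ hu hne, hdisj _ ht _ hu hne⟩
    refine ⟨hfe, ?_⟩
    ext t
    constructor
    · rintro ⟨μ, g, ν, ξ, h2, η, α, β, hm1, hm2, hab, hh1, hh2, rfl⟩
      obtain ⟨ρ, hρ⟩ := hdiag _ hm1
      rw [Prod.mk.injEq, Prod.mk.injEq] at hρ
      obtain ⟨rfl, rfl, rfl⟩ := hρ
      obtain ⟨σ, hσ⟩ := hdiag _ hm2
      rw [Prod.mk.injEq, Prod.mk.injEq] at hσ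
      obtain ⟨rfl, rfl, rfl⟩ := hσ
      -- hab : (α,β) ∈ lmin ν η
      rcases eq_or_ne ν η with rfl | hne
      · obtain ⟨hA, hB, hC, hD⟩ := hab
        rw [sup_idem, add_eq_left] at hD
        have hβ0 : Λ.deg β = 0 := by
          have := congrArg Λ.deg hC
          rw [Λ.deg_comp, Λ.deg_comp, hD, add_zero, left_eq_add] at this
          exact this
        have hαv : α = Λ.src ν := by rw [← Λ.rng_vtx α hD, ← hA]
        have hβv : β = Λ.src ν := by rw [← Λ.rng_vtx β hβ0, ← hB]
        subst hαv; subst hβv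
        have eα : SS.act 1 (Λ.src ν) = Λ.src ν := SS.act_one _
        have eβ : SS.act (1 : G)⁻¹ (Λ.src ν) = Λ.src ν := by
          rw [inv_one]; exact SS.act_one _
        have c1 : Λ.comp ν (SS.act 1 (Λ.src ν)) hh1 = ν :=
          (comp_congr Λ hh1 eα).trans (Λ.comp_src_id ν _)
        have c2 : Λ.comp ν (SS.act (1 : G)⁻¹ (Λ.src ν)) hh2 = ν :=
          (comp_congr Λ hh2 eβ).trans (Λ.comp_src_id ν _)
        rw [c1, c2, phi_one, phi_one, one_mul]
        exact hm1
      · exfalso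
        have : Λ.lmin ν η = ∅ :=
          hdisj _ hm1 _ hm2 (by simp [Prod.ext_iff, hne])
        rw [this] at hab
        exact hab
    · intro htF
      obtain ⟨μ, rfl⟩ := hdiag t htF
      have hv : Λ.rng (Λ.src μ) = Λ.src μ := Λ.rng_vtx _ (Λ.deg_src μ)
      have eα : SS.act (1 : G) (Λ.src μ) = Λ.src μ := SS.act_one _
      have eβ : SS.act ((1 : G))⁻¹ (Λ.src μ) = Λ.src μ := by
        rw [inv_one]; exact SS.act_one _
      have hh1 : Λ.src μ = Λ.rng (SS.act (1 : G) (Λ.src μ)) := by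
        rw [eα, hv]
      have hh2 : Λ.src μ = Λ.rng (SS.act ((1 : G))⁻¹ (Λ.src μ)) := by
        rw [eβ, hv]
      refine ⟨μ, 1, μ, μ, 1, μ, Λ.src μ, Λ.src μ, htF, htF, src_in_lmin Λ μ,
        hh1, hh2, ?_⟩
      have c1 : Λ.comp μ (SS.act 1 (Λ.src μ)) hh1 = μ :=
        (comp_congr Λ hh1 eα).trans (Λ.comp_src_id μ _)
      have c2 : Λ.comp μ (SS.act (1 : G)⁻¹ (Λ.src μ)) hh2 = μ :=
        (comp_congr Λ hh2 eβ).trans (Λ.comp_src_id μ _)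
      rw [c1, c2, phi_one, phi_one, one_mul]
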